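/- For all complex numbers a, b and all real 1 < p < 2, one has |b − a|^p ≤ (p−1)^{−p/2} · (Re((|b|^{p-2}b − |a|^{p-2}a)·conj(b−a)))^{p/2} · (|a|^p + |b|^p)^{(2−p)/2}, where the quantity Re((|b|^{p-2}b − |a|^{p-2}a)·conj(b−a)) is nonnegative. -/

import Mathlib

open Real

private lemma auxA {q t : ℝ} (hq0 : 0 ≤ q) (hq1 : q ≤ 1) (ht : 0 ≤ t) :
    t ^ q ≤ 1 + q * (t - 1) := by
  have h := rpow_one_add_le_one_add_mul_self (s := t - 1) (by linarith) hq0 hq1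
  simpa using h

/-- For `0 ≤ s ≤ r`, `(p-1)(r-s) r^(p-2) ≤ r^(p-1) - s^(p-1)`. -/
private lemma auxB {p : ℝ} (hp1 : 1 < p) (hp2 : p < 2) {r s : ℝ} (hs : 0 ≤ s) (hsr : s ≤ r) :
    (p - 1) * (r - s) * r ^ (p - 2) ≤ r ^ (p - 1) - s ^ (p - 1) := by
  rcases eq_or_lt_of_le (hs.trans hsr) with h0 | hr
  · have hr0 : r = 0 := h0.symm
    have hs0 : s = 0 := le_antisymm (hr0 ▸ hsr) hs
    simp [hr0, hs0, Real.zero_rpow (by linarith : p - 2 ≠ 0),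
      Real.zero_rpow (by linarith : p - 1 ≠ 0)]
  · have hA := auxA (q := p - 1) (t := s / r) (by linarith) (by linarith)
      (div_nonneg hs hr.le)
    have hrpos : (0:ℝ) < r ^ (p - 1) := Real.rpow_pos_of_pos hr _
    have hu : s ^ (p - 1) = (s / r) ^ (p - 1) * r ^ (p - 1) := by
      rw [Real.div_rpow hs hr.le]
      field_simp
    have h3 : r ^ (p - 2) * r = r ^ (p - 1) := by
      rw [show p - 1 = p - 2 + 1 by ring, Real.rpow_add_one hr.ne']
    have h5 : s / r * r ^ (p - 1) = s * r ^ (p - 2) := by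
      rw [← h3]
      field_simp
    have hmul := mul_le_mul_of_nonneg_right hA hrpos.le
    nlinarith [hmul, hu, h3, h5]

/-- The key pointwise inequality, ordered version `s ≤ r`. -/
private lemma keyD' {p : ℝ} (hp1 : 1 < p) (hp2 : p < 2) {r s c : ℝ} (hs : 0 ≤ s) (hsr : s ≤ r)
    (hc : |c| ≤ r * s) :
    (p - 1) * (r ^ 2 + s ^ 2 - 2 * c) * r ^ (p - 2) ≤
      r ^ p + s ^ p - (r ^ (p - 2) + s ^ (p - 2)) * c := by
  have hr : 0 ≤ r := hs.trans hsr
  rcases eq_or_lt_of_le hr with h0 | hrpos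
  · have hr0 : r = 0 := h0.symm
    have hs0 : s = 0 := le_antisymm (hr0 ▸ hsr) hs
    have hc0 : c = 0 := by
      rw [hr0, zero_mul] at hc
      exact abs_eq_zero.mp (le_antisymm hc (abs_nonneg c))
    simp [hr0, hs0, hc0, Real.zero_rpow (by linarith : p - 2 ≠ 0),
      Real.zero_rpow (by linarith : p ≠ 0)]
  · -- r > 0
    have hc1 : c ≤ r * s := (abs_le.mp hc).2
    have hrp2 : (0:ℝ) < r ^ (p - 2) := Real.rpow_pos_of_pos hrpos _
    have hrp1 : r ^ (p - 2) * r = r ^ (p - 1) := by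
      rw [show p - 1 = p - 2 + 1 by ring, Real.rpow_add_one hrpos.ne']
    have hrp : r ^ (p - 1) * r = r ^ p := by
      rw [show p = p - 1 + 1 by ring, Real.rpow_add_one hrpos.ne']
      rw [show p - 1 + 1 - 1 = p - 1 by ring]
    rcases eq_or_lt_of_le hs with hs0 | hspos
    · -- s = 0, hence c = 0
      have hs0' : s = 0 := hs0.symm
      have hc0 : c = 0 := by
        rw [hs0', mul_zero] at hc
        exact abs_eq_zero.mp (le_antisymm hc (abs_nonneg c))
      have hr2p : r ^ (p - 2) * r ^ 2 = r ^ p := by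
        have : r ^ (2:ℕ) = r * r := sq r
        rw [this]
        linear_combination r * hrp1 + hrp
      rw [hs0', hc0]
      have hrpnn : (0:ℝ) ≤ r ^ p := Real.rpow_nonneg hr p
      simp only [Real.zero_rpow (by linarith : p - 2 ≠ 0),
        Real.zero_rpow (by linarith : p ≠ 0)]
      nlinarith [hr2p, hrpnn]
    · -- s > 0
      have hsp1 : s ^ (p - 2) * s = s ^ (p - 1) := by
        rw [show p - 1 = p - 2 + 1 by ring, Real.rpow_add_one hspos.ne']
      have hsp : s ^ (p - 1) * s = s ^ p := by
        rw [show p = p - 1 + 1 by ring, Real.rpow_add_one hspos.ne']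
        rw [show p - 1 + 1 - 1 = p - 1 by ring]
      have hanti : r ^ (p - 2) ≤ s ^ (p - 2) :=
        Real.rpow_le_rpow_of_nonpos hspos hsr (by linarith)
      have hB := auxB hp1 hp2 hs hsr
      have hDrs : r ^ p + s ^ p - (r ^ (p - 2) + s ^ (p - 2)) * (r * s) =
          (r - s) * (r ^ (p - 1) - s ^ (p - 1)) := by
        linear_combination (-s) * hrp1 + (-r) * hsp1 - hrp - hsp
      have F1 := mul_le_mul_of_nonneg_left hB (by linarith : (0:ℝ) ≤ r - s)
      have hslope : 2 * (p - 1) * r ^ (p - 2) ≤ r ^ (p - 2) + s ^ (p - 2) := by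
        nlinarith [hanti, hrp2, mul_nonneg (show (0:ℝ) ≤ 4 - 2 * p by linarith) hrp2.le]
      have F2 := mul_le_mul_of_nonneg_right hslope (by linarith : (0:ℝ) ≤ r * s - c)
      nlinarith [F1, F2, hDrs]

private lemma keyD {p : ℝ} (hp1 : 1 < p) (hp2 : p < 2) {r s c : ℝ} (hr : 0 ≤ r) (hs : 0 ≤ s)
    (hc : |c| ≤ r * s) :
    (p - 1) * (r ^ 2 + s ^ 2 - 2 * c) * (max r s) ^ (p - 2) ≤
      r ^ p + s ^ p - (r ^ (p - 2) + s ^ (p - 2)) * c := by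
  rcases le_total s r with h | h
  · rw [max_eq_left h]
    exact keyD' hp1 hp2 hs h hc
  · rw [max_eq_right h]
    have := keyD' hp1 hp2 (c := c) hr h (by rwa [mul_comm])
    nlinarith [this]

theorem simon_lt_two (p : ℝ) (hp1 : 1 < p) (hp2 : p < 2) (a b : ℂ) :
    0 ≤ (((‖b‖ ^ (p - 2) : ℝ) * b - (‖a‖ ^ (p - 2) : ℝ) * a) *
          (starRingEnd ℂ) (b - a)).re ∧
    ‖b - a‖ ^ p ≤
      (p - 1) ^ (-(p / 2)) *
        ((((‖b‖ ^ (p - 2) : ℝ) * b - (‖a‖ ^ (p - 2) : ℝ) * a) *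
            (starRingEnd ℂ) (b - a)).re) ^ (p / 2) *
        (‖a‖ ^ p + ‖b‖ ^ p) ^ ((2 - p) / 2) := by
  have hp0 : p ≠ 0 := by linarith
  set r := ‖a‖ with hrdef
  set s := ‖b‖ with hsdef
  have hr : 0 ≤ r := norm_nonneg a
  have hs : 0 ≤ s := norm_nonneg b
  set c : ℝ := b.re * a.re + b.im * a.im with hcdef
  set S : ℝ := (((s ^ (p - 2) : ℝ) * b - (r ^ (p - 2) : ℝ) * a) * (starRingEnd ℂ) (b - a)).re
    with hSdef
  have hr2 : a.re * a.re + a.im * a.im = r ^ 2 := by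
    rw [hrdef, Complex.sq_norm, Complex.normSq_apply]
  have hs2 : b.re * b.re + b.im * b.im = s ^ 2 := by
    rw [hsdef, Complex.sq_norm, Complex.normSq_apply]
  have hrp : r ^ (p - 2) * r ^ 2 = r ^ p := by
    rcases eq_or_lt_of_le hr with h0 | h0
    · rw [← h0]
      simp [Real.zero_rpow (by linarith : p - 2 ≠ 0), Real.zero_rpow hp0]
    · rw [← Real.rpow_natCast r 2, ← Real.rpow_add h0]
      norm_num
  have hsp : s ^ (p - 2) * s ^ 2 = s ^ p := by
    rcases eq_or_lt_of_le hs with h0 | h0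
    · rw [← h0]
      simp [Real.zero_rpow (by linarith : p - 2 ≠ 0), Real.zero_rpow hp0]
    · rw [← Real.rpow_natCast s 2, ← Real.rpow_add h0]
      norm_num
  have hS : S = r ^ p + s ^ p - (r ^ (p - 2) + s ^ (p - 2)) * c := by
    rw [hSdef, hcdef]
    simp only [Complex.mul_re, Complex.sub_re, Complex.sub_im, Complex.conj_re, Complex.conj_im,
      Complex.mul_im, Complex.ofReal_re, Complex.ofReal_im]
    linear_combination (s ^ (p - 2)) * hs2 + (r ^ (p - 2)) * hr2 + hrp + hsp
  have hc : |c| ≤ r * s := by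
    have h1 := Complex.abs_re_le_norm (b * (starRingEnd ℂ) a)
    rw [norm_mul, Complex.norm_conj] at h1
    have h2 : (b * (starRingEnd ℂ) a).re = c := by
      rw [hcdef]
      simp [Complex.mul_re, Complex.conj_re, Complex.conj_im]
    rw [h2, ← hrdef, ← hsdef] at h1
    calc |c| ≤ s * r := h1
      _ = r * s := mul_comm s r
  have hT : ‖b - a‖ ^ 2 = r ^ 2 + s ^ 2 - 2 * c := by
    rw [Complex.sq_norm, Complex.normSq_apply]
    simp only [Complex.sub_re, Complex.sub_im]
    rw [hcdef]
    linear_combination hr2 + hs2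
  set M := max r s with hM
  have hMnn : (0:ℝ) ≤ M := le_trans hr (le_max_left r s)
  have hkey : (p - 1) * (r ^ 2 + s ^ 2 - 2 * c) * M ^ (p - 2) ≤ S := by
    rw [hS]; exact keyD hp1 hp2 hr hs hc
  have hT0 : 0 ≤ r ^ 2 + s ^ 2 - 2 * c := by
    rw [← hT]; positivity
  have hS0 : 0 ≤ S := by
    have h := mul_nonneg (mul_nonneg (by linarith : (0:ℝ) ≤ p - 1) hT0)
      (Real.rpow_nonneg hMnn (p - 2))
    linarith
  refine ⟨hS0, ?_⟩
  rcases eq_or_lt_of_le hMnn with hM0 | hMpos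
  · -- M = 0 : a = b = 0
    have hr0 : r = 0 := le_antisymm (hM0 ▸ le_max_left r s) hr
    have hs0 : s = 0 := le_antisymm (hM0 ▸ le_max_right r s) hs
    have ha0 : a = 0 := by rwa [hrdef, norm_eq_zero] at hr0
    have hb0 : b = 0 := by rwa [hsdef, norm_eq_zero] at hs0
    have hc0 : c = 0 := by
      rw [hr0, zero_mul] at hc
      exact abs_eq_zero.mp (le_antisymm hc (abs_nonneg c))
    have hS0' : S = 0 := by
      rw [hS, hr0, hs0, hc0]
      simp [Real.zero_rpow hp0]
    rw [hS0', hr0, hs0, ha0, hb0]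
    simp [Real.zero_rpow hp0, Real.zero_rpow (show p / 2 ≠ 0 by positivity)]
  · -- M > 0
    have hp1' : (0:ℝ) < p - 1 := by linarith
    have hMp2 : (0:ℝ) < M ^ (p - 2) := Real.rpow_pos_of_pos hMpos _
    have hM2p : M ^ (p - 2) * M ^ (2 - p) = 1 := by
      rw [← Real.rpow_add hMpos]; norm_num
    have e1 : (p - 1) * (p - 1)⁻¹ = 1 := mul_inv_cancel₀ hp1'.ne'
    have hT1 : r ^ 2 + s ^ 2 - 2 * c ≤ (p - 1)⁻¹ * S * M ^ (2 - p) := by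
      have h := mul_le_mul_of_nonneg_right hkey
        (le_of_lt (mul_pos (inv_pos.mpr hp1') (Real.rpow_pos_of_pos hMpos (2 - p))))
      have key2 : (p - 1) * (r ^ 2 + s ^ 2 - 2 * c) * M ^ (p - 2) *
          ((p - 1)⁻¹ * M ^ (2 - p)) = r ^ 2 + s ^ 2 - 2 * c := by
        rw [show (p - 1) * (r ^ 2 + s ^ 2 - 2 * c) * M ^ (p - 2) * ((p - 1)⁻¹ * M ^ (2 - p)) =
          (r ^ 2 + s ^ 2 - 2 * c) * ((p - 1) * (p - 1)⁻¹) * (M ^ (p - 2) * M ^ (2 - p)) by ring,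
          e1, hM2p]
        ring
      calc r ^ 2 + s ^ 2 - 2 * c
          = (p - 1) * (r ^ 2 + s ^ 2 - 2 * c) * M ^ (p - 2) * ((p - 1)⁻¹ * M ^ (2 - p)) :=
            key2.symm
        _ ≤ S * ((p - 1)⁻¹ * M ^ (2 - p)) := h
        _ = (p - 1)⁻¹ * S * M ^ (2 - p) := by ring
    have hMle : M ^ p ≤ r ^ p + s ^ p := by
      rcases le_total s r with h | h
      · rw [hM, max_eq_left h]
        have := Real.rpow_nonneg hs p
        linarith
      · rw [hM, max_eq_right h]
        have := Real.rpow_nonneg hr p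
        linarith
    have hsum0 : (0:ℝ) ≤ r ^ p + s ^ p := by positivity
    have hM2p' : M ^ (2 - p) ≤ (r ^ p + s ^ p) ^ ((2 - p) / p) := by
      have h := Real.rpow_le_rpow (Real.rpow_nonneg hMpos.le p) hMle
        (show (0:ℝ) ≤ (2 - p) / p from div_nonneg (by linarith) (by linarith))
      rwa [← Real.rpow_mul hMpos.le, show p * ((2 - p) / p) = 2 - p by field_simp] at h
    have hT2 : r ^ 2 + s ^ 2 - 2 * c ≤ (p - 1)⁻¹ * S * (r ^ p + s ^ p) ^ ((2 - p) / p) := by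
      refine hT1.trans ?_
      have : 0 ≤ (p - 1)⁻¹ * S := mul_nonneg (inv_nonneg.mpr hp1'.le) hS0
      exact mul_le_mul_of_nonneg_left hM2p' this
    have habs : ‖b - a‖ ^ p = (r ^ 2 + s ^ 2 - 2 * c) ^ (p / 2) := by
      rw [← hT, ← Real.rpow_natCast (‖b - a‖) 2,
        ← Real.rpow_mul (norm_nonneg _),
        show ((2:ℕ):ℝ) * (p / 2) = p by push_cast; ring]
    rw [habs]
    have hfinal := Real.rpow_le_rpow hT0 hT2 (by positivity : (0:ℝ) ≤ p / 2)
    refine hfinal.trans (le_of_eq ?_)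
    rw [Real.mul_rpow (mul_nonneg (inv_nonneg.mpr hp1'.le) hS0) (Real.rpow_nonneg hsum0 _),
      Real.mul_rpow (inv_nonneg.mpr hp1'.le) hS0,
      Real.inv_rpow hp1'.le, ← Real.rpow_neg hp1'.le,
      ← Real.rpow_mul hsum0,
      show (2 - p) / p * (p / 2) = (2 - p) / 2 by field_simp]
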